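/- Let C : Y × Y → ℤ be a ℤ-bilinear form. Then C satisfies C(e_i, e_j) + C(e_j, s_j(e_i)) = 0 for all indices i, j if and only if the quadratic form q(y) = C(y, y) is W-invariant, i.e. q(s_j(y)) = q(y) for all j and all y ∈ Y. -/
import Mathlib

/-- `p : Fin n → Fin n → ℤ` is a generalized Cartan matrix. -/
def IsGCM {n : ℕ} (p : Fin n → Fin n → ℤ) : Prop :=
  (∀ i, p i i = 2) ∧ (∀ i j, i ≠ j → p i j ≤ 0) ∧ (∀ i j, i ≠ j → (p i j = 0 ↔ p j i = 0))

/-- The simple reflection `s_j(y) = y − α_j(y)·e_j`, where `α_j(e_i) = p i j`. -/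
def simpleRefl {n : ℕ} (p : Fin n → Fin n → ℤ) (j : Fin n) (y : Fin n → ℤ) : Fin n → ℤ :=
  y - (∑ i, y i * p i j) • Pi.single j 1

lemma alpha_single {n : ℕ} (p : Fin n → Fin n → ℤ) (i j : Fin n) :
    (∑ k, (Pi.single i 1 : Fin n → ℤ) k * p k j) = p i j := by
  rw [Finset.sum_eq_single i]
  · simp
  · intro b _ hb; simp [Pi.single_eq_of_ne hb]
  · simp

lemma expand_left {n : ℕ} (C : (Fin n → ℤ) →ₗ[ℤ] (Fin n → ℤ) →ₗ[ℤ] ℤ)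
    (y z : Fin n → ℤ) : C y z = ∑ i, y i * C (Pi.single i 1) z := by
  have : y = ∑ i, y i • (Pi.single i 1 : Fin n → ℤ) := by
    funext k
    simp [Finset.sum_apply, Pi.single_apply, Finset.sum_ite_eq', mul_comm]
  conv_lhs => rw [this]
  simp only [map_sum, map_smul, LinearMap.sum_apply, LinearMap.smul_apply, smul_eq_mul]

lemma expand_right {n : ℕ} (C : (Fin n → ℤ) →ₗ[ℤ] (Fin n → ℤ) →ₗ[ℤ] ℤ)
    (y z : Fin n → ℤ) : C z y = ∑ i, y i * C z (Pi.single i 1) := by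
  have : y = ∑ i, y i • (Pi.single i 1 : Fin n → ℤ) := by
    funext k
    simp [Finset.sum_apply, Pi.single_apply, Finset.sum_ite_eq', mul_comm]
  conv_lhs => rw [this]
  simp only [map_sum, map_smul, LinearMap.sum_apply, LinearMap.smul_apply, smul_eq_mul]

lemma refl_expand {n : ℕ} (p : Fin n → Fin n → ℤ)
    (C : (Fin n → ℤ) →ₗ[ℤ] (Fin n → ℤ) →ₗ[ℤ] ℤ) (j : Fin n) (y : Fin n → ℤ) :
    C (simpleRefl p j y) (simpleRefl p j y) =
      C y y - (∑ i, y i * p i j) * (C y (Pi.single j 1) + C (Pi.single j 1) y)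
        + (∑ i, y i * p i j) * (∑ i, y i * p i j) * C (Pi.single j 1) (Pi.single j 1) := by
  unfold simpleRefl
  set a := ∑ i, y i * p i j
  simp only [map_sub, map_smul, LinearMap.sub_apply, LinearMap.smul_apply, smul_eq_mul]
  ring

/-- A `ℤ`-bilinear form `C` on `Y = ℤⁿ` satisfies
`C(eᵢ, eⱼ) + C(eⱼ, sⱼ(eᵢ)) = 0` for all `i, j` iff the quadratic form `q(y) = C(y, y)` is
`W`-invariant, i.e. `q(sⱼ(y)) = q(y)` for all `j` and `y`. -/
theorem bilinear_reflection_condition_iff_quadratic_invariant {n : ℕ}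
    (p : Fin n → Fin n → ℤ) (hp : IsGCM p)
    (C : (Fin n → ℤ) →ₗ[ℤ] (Fin n → ℤ) →ₗ[ℤ] ℤ) :
    (∀ i j : Fin n,
        C (Pi.single i 1) (Pi.single j 1) + C (Pi.single j 1) (simpleRefl p j (Pi.single i 1))
          = 0) ↔
      (∀ (j : Fin n) (y : Fin n → ℤ), C (simpleRefl p j y) (simpleRefl p j y) = C y y) := by
  -- rewrite the first condition into an algebraic one
  have hcond : ∀ i j : Fin n,
      (C (Pi.single i 1) (Pi.single j 1) + C (Pi.single j 1) (simpleRefl p j (Pi.single i 1)) = 0)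
      ↔ (C (Pi.single i 1) (Pi.single j 1) + C (Pi.single j 1) (Pi.single i 1)
          = p i j * C (Pi.single j 1) (Pi.single j 1)) := by
    intro i j
    unfold simpleRefl
    rw [alpha_single]
    simp only [map_sub, map_smul, smul_eq_mul]
    constructor <;> intro h <;> linarith
  constructor
  · intro h j y
    have key : C y (Pi.single j 1) + C (Pi.single j 1) y
        = (∑ i, y i * p i j) * C (Pi.single j 1) (Pi.single j 1) := by
      rw [expand_left C y (Pi.single j 1), expand_right C y (Pi.single j 1),
        ← Finset.sum_add_distrib, Finset.sum_mul]
      refine Finset.sum_congr rfl fun i _ => ?_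
      have := (hcond i j).mp (h i j)
      rw [← mul_add, this]; ring
    rw [refl_expand, key]; ring
  · intro h i j
    rw [hcond]
    have key : ∀ z : Fin n → ℤ,
        (∑ i, z i * p i j) * (C z (Pi.single j 1) + C (Pi.single j 1) z)
          = (∑ i, z i * p i j) * (∑ i, z i * p i j) * C (Pi.single j 1) (Pi.single j 1) := by
      intro z
      have := h j z
      rw [refl_expand] at this
      linarith
    by_cases hpij : p i j = 0
    · rcases eq_or_ne i j with rfl | hij
      · rw [hp.1 i] at hpij; omega
      -- use y = e_i + e_j
      have hji : p j i = 0 := ((hp.2.2 i j hij).mp hpij)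
      have k := key (Pi.single i 1 + Pi.single j 1)
      have hsum : (∑ k, (Pi.single i 1 + Pi.single j 1 : Fin n → ℤ) k * p k j) = 2 := by
        simp only [Pi.add_apply, add_mul, Finset.sum_add_distrib, alpha_single]
        rw [hpij, hp.1 j]; ring
      rw [hsum] at k
      simp only [map_add, LinearMap.add_apply] at k
      rw [hpij]
      linarith
    · have k := key (Pi.single i 1)
      rw [alpha_single] at k
      have : p i j * ((C (Pi.single i 1)) (Pi.single j 1) + (C (Pi.single j 1)) (Pi.single i 1)
          - p i j * (C (Pi.single j 1)) (Pi.single j 1)) = 0 := by linarith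
      rcases mul_eq_zero.mp this with h0 | h0
      · exact absurd h0 hpij
      · linarith
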